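/- Let G be a finite directed graph on n vertices where vertex t has out-degree d_t. Partition vertices into buckets by out-degree: S_0 = {j : d_j = 0} and S_i = {j : 2^{i-1} ≤ d_j < 2^i} for 1 ≤ i ≤ ⌈log₂ n⌉. Then if I denotes the maximum size of an independent set of the undirected graph underlying G, we have Σ_{j=1}^n 1/(d_j + 1) ≤ 4·|I|·(log₂ n + 1). -/

import Mathlib

open Finset

lemma greedy_indep {n D : ℕ} (A : Fin n → Finset (Fin n)) (hirr : ∀ t, t ∉ A t)
    (S : Finset (Fin n)) (hS : ∀ x ∈ S, (A x).card ≤ D) :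
    ∃ J, J ⊆ S ∧ (∀ x ∈ J, ∀ y ∈ J, y ∉ A x) ∧ S.card ≤ (2 * D + 1) * J.card := by
  induction S using Finset.strongInductionOn with
  | _ S ih =>
    rcases S.eq_empty_or_nonempty with rfl | hne
    · exact ⟨∅, by simp⟩
    · -- find x in S with small in-degree within S
      have hsum : ∑ x ∈ S, (S.filter (fun y => x ∈ A y)).card ≤ ∑ _x ∈ S, D := by
        have hcomm : ∑ x ∈ S, (S.filter (fun y => x ∈ A y)).card
            = ∑ y ∈ S, (S.filter (fun x => x ∈ A y)).card := by
          simp only [Finset.card_filter]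
          exact Finset.sum_comm
        rw [hcomm]
        refine Finset.sum_le_sum fun y hy => ?_
        calc (S.filter (fun x => x ∈ A y)).card ≤ (A y).card :=
              Finset.card_le_card (fun z hz => (Finset.mem_filter.mp hz).2)
          _ ≤ D := hS y hy
      obtain ⟨x, hxS, hx⟩ := Finset.exists_le_of_sum_le hne hsum
      set R : Finset (Fin n) := insert x ((A x) ∪ S.filter (fun y => x ∈ A y)) with hR
      set T : Finset (Fin n) := S \ R with hT
      have hTS : T ⊂ S := by
        refine Finset.ssubset_iff_of_subset (Finset.sdiff_subset) |>.mpr ?_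
        exact ⟨x, hxS, by simp [hT, hR]⟩
      have hcardR : R.card ≤ 2 * D + 1 := by
        calc R.card ≤ ((A x) ∪ S.filter (fun y => x ∈ A y)).card + 1 :=
              Finset.card_insert_le _ _
          _ ≤ ((A x).card + (S.filter (fun y => x ∈ A y)).card) + 1 :=
              add_le_add_left (Finset.card_union_le _ _) 1
          _ ≤ (D + D) + 1 := add_le_add_left (add_le_add (hS x hxS) hx) 1
          _ = 2 * D + 1 := by ring
      have hcardS : S.card ≤ T.card + (2 * D + 1) := by
        have hsub : S ⊆ T ∪ R := by
          intro z hz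
          by_cases hzR : z ∈ R
          · exact Finset.mem_union_right _ hzR
          · exact Finset.mem_union_left _ (Finset.mem_sdiff.mpr ⟨hz, hzR⟩)
        calc S.card ≤ (T ∪ R).card := Finset.card_le_card hsub
          _ ≤ T.card + R.card := Finset.card_union_le _ _
          _ ≤ T.card + (2 * D + 1) := add_le_add_right hcardR _
      obtain ⟨J', hJ'T, hJ'ind, hJ'card⟩ :=
        ih T hTS (fun y hy => hS y (Finset.mem_sdiff.mp hy).1)
      have hxT : x ∉ T := by simp [hT, hR]
      have hxJ' : x ∉ J' := fun h => hxT (hJ'T h)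
      refine ⟨insert x J', ?_, ?_, ?_⟩
      · exact Finset.insert_subset hxS (hJ'T.trans Finset.sdiff_subset)
      · have key : ∀ y ∈ J', y ∉ A x ∧ x ∉ A y := by
          intro y hy
          have hyT := hJ'T hy
          have hyS := (Finset.mem_sdiff.mp hyT).1
          have hnot := (Finset.mem_sdiff.mp hyT).2
          simp only [hR, Finset.mem_insert, Finset.mem_union, Finset.mem_filter] at hnot
          push_neg at hnot
          exact ⟨hnot.2.1, hnot.2.2 hyS⟩
        intro a ha b hb
        rcases Finset.mem_insert.mp ha with ha' | ha' <;>
          rcases Finset.mem_insert.mp hb with hb' | hb'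
        · rw [ha', hb']; exact hirr x
        · rw [ha']; exact (key b hb').1
        · rw [hb']; exact (key a ha').2
        · exact hJ'ind a ha' b hb'
      · rw [Finset.card_insert_of_notMem hxJ']
        calc S.card ≤ T.card + (2 * D + 1) := hcardS
          _ ≤ (2 * D + 1) * J'.card + (2 * D + 1) := add_le_add_left hJ'card _
          _ = (2 * D + 1) * (J'.card + 1) := by ring

/-- For a directed graph on `n` vertices with out-neighborhoods `A` and
out-degrees `d_j = |A j|`, if `I` is a maximum independent set of the underlying
undirected graph, then `Σ_j 1/(d_j + 1) ≤ 4·|I|·(log₂ n + 1)`. -/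
theorem degree_sum_le_indep (n : ℕ) (hn : 1 ≤ n)
    (A : Fin n → Finset (Fin n)) (hirr : ∀ t, t ∉ A t)
    (I : Finset (Fin n)) (hI : ∀ x ∈ I, ∀ y ∈ I, y ∉ A x)
    (hImax : ∀ s : Finset (Fin n), (∀ x ∈ s, ∀ y ∈ s, y ∉ A x) → s.card ≤ I.card) :
    ∑ j : Fin n, (1 : ℝ) / ((A j).card + 1) ≤ 4 * I.card * (Real.logb 2 n + 1) := by
  classical
  set c : ℝ := (I.card : ℝ) with hc
  have hc0 : (0 : ℝ) ≤ c := Nat.cast_nonneg _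
  have hL0 : (0 : ℝ) ≤ Real.logb 2 n :=
    Real.logb_nonneg (by norm_num) (by exact_mod_cast hn)
  set K : ℕ := Nat.clog 2 n with hK
  set b : Fin n → ℕ :=
    fun j => if (A j).card = 0 then 0 else Nat.log 2 (A j).card + 1 with hb
  -- degrees are < n ≤ 2^K
  have hdeg : ∀ j : Fin n, (A j).card < 2 ^ K := by
    intro j
    have h1 : (A j).card < n := by
      have : A j ⊂ Finset.univ := Finset.ssubset_univ_iff.mpr (by
        intro h
        exact hirr j (h ▸ Finset.mem_univ j))
      simpa using Finset.card_lt_card this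
    exact lt_of_lt_of_le h1 (Nat.le_pow_clog (by norm_num) n)
  have hmaps : ∀ j : Fin n, j ∈ Finset.univ → b j ∈ Finset.range (K + 1) := by
    intro j _
    rw [Finset.mem_range]
    by_cases h : (A j).card = 0
    · simp only [hb]
      rw [if_pos h]
      omega
    · simp only [hb]
      rw [if_neg h]
      have := Nat.log_lt_of_lt_pow h (hdeg j)
      omega
  set F : ℕ → ℝ :=
    fun i => ∑ j ∈ Finset.univ.filter (fun j => b j = i), (1 : ℝ) / ((A j).card + 1)
      with hF
  have hsplit : ∑ j : Fin n, (1 : ℝ) / ((A j).card + 1)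
      = ∑ i ∈ Finset.range (K + 1), F i :=
    (Finset.sum_fiberwise_of_maps_to hmaps _).symm
  -- bucket 0
  have hfib0 : F 0 ≤ c := by
    set S0 := Finset.univ.filter (fun j => b j = 0) with hS0
    have hd0 : ∀ j ∈ S0, (A j).card = 0 := by
      intro j hj
      have hbj := (Finset.mem_filter.mp hj).2
      by_contra h
      simp only [hb] at hbj
      rw [if_neg h] at hbj
      omega
    have hind : ∀ x ∈ S0, ∀ y ∈ S0, y ∉ A x := by
      intro x hx y _
      have := hd0 x hx
      rw [Finset.card_eq_zero] at this
      simp [this]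
    have hcard : S0.card ≤ I.card := hImax S0 hind
    have heq : F 0 = (S0.card : ℝ) := by
      have h1 : ∀ j ∈ S0, (1:ℝ)/((A j).card + 1) = 1 := fun j hj => by
        rw [hd0 j hj]; norm_num
      calc F 0 = ∑ j ∈ S0, (1:ℝ)/((A j).card + 1) := rfl
        _ = ∑ _j ∈ S0, (1:ℝ) := Finset.sum_congr rfl h1
        _ = (S0.card : ℝ) := by simp
    rw [heq, hc]
    exact_mod_cast hcard
  -- buckets i ≥ 1
  have hfibgen : ∀ m : ℕ, F (m + 1) ≤ ((2:ℝ) ^ (m + 2) - 1) * c / ((2:ℝ) ^ m + 1) := by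
    intro m
    set Si := Finset.univ.filter (fun j => b j = m + 1) with hSi
    have hdm : ∀ j ∈ Si, 2 ^ m ≤ (A j).card ∧ (A j).card < 2 ^ (m + 1) := by
      intro j hj
      have hbj := (Finset.mem_filter.mp hj).2
      by_cases h : (A j).card = 0
      · exfalso
        simp only [hb] at hbj
        rw [if_pos h] at hbj
        omega
      · simp only [hb] at hbj
        rw [if_neg h] at hbj
        have hlog : Nat.log 2 (A j).card = m := by omega
        constructor
        · calc 2 ^ m = 2 ^ Nat.log 2 (A j).card := by rw [hlog]
            _ ≤ (A j).card := Nat.pow_log_le_self 2 h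
        · calc (A j).card < 2 ^ (Nat.log 2 (A j).card).succ :=
              Nat.lt_pow_succ_log_self (by norm_num) _
            _ = 2 ^ (m + 1) := by rw [hlog]
    -- greedy bound on |Si|
    obtain ⟨J, _, hJind, hJcard⟩ := greedy_indep (D := 2 ^ (m + 1) - 1) A hirr Si
      (fun x hx => Nat.le_sub_one_of_lt (hdm x hx).2)
    have hSicard : Si.card ≤ (2 ^ (m + 2) - 1) * I.card := by
      have h1 : J.card ≤ I.card := hImax J hJind
      have h2 : 2 * (2 ^ (m + 1) - 1) + 1 = 2 ^ (m + 2) - 1 := by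
        have : (1:ℕ) ≤ 2 ^ (m + 1) := Nat.one_le_two_pow
        have : (2:ℕ) ^ (m + 2) = 2 * 2 ^ (m + 1) := by ring
        omega
      calc Si.card ≤ (2 * (2 ^ (m + 1) - 1) + 1) * J.card := hJcard
        _ = (2 ^ (m + 2) - 1) * J.card := by rw [h2]
        _ ≤ (2 ^ (m + 2) - 1) * I.card := Nat.mul_le_mul_left _ h1
    have hpos : (0:ℝ) < (2:ℝ) ^ m + 1 := by positivity
    have hterm : F (m + 1) ≤ (Si.card : ℝ) * (1 / ((2:ℝ) ^ m + 1)) := by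
      rw [hF]
      have := Finset.sum_le_card_nsmul Si (fun j => (1 : ℝ) / ((A j).card + 1))
        (1 / ((2:ℝ) ^ m + 1)) ?_
      · simpa [nsmul_eq_mul] using this
      · intro j hj
        have h1 := (hdm j hj).1
        have h1' : (2:ℝ) ^ m ≤ ((A j).card : ℝ) := by exact_mod_cast h1
        apply div_le_div_of_nonneg_left (by norm_num) (by positivity)
        linarith
    have hcast : (Si.card : ℝ) ≤ ((2:ℝ) ^ (m + 2) - 1) * c := by
      have h3 : (1:ℕ) ≤ 2 ^ (m + 2) := Nat.one_le_two_pow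
      rw [hc]
      calc (Si.card : ℝ) ≤ (((2 ^ (m + 2) - 1) * I.card : ℕ) : ℝ) := by
            exact_mod_cast hSicard
        _ = ((2:ℝ) ^ (m + 2) - 1) * (I.card : ℝ) := by push_cast [h3]; ring
    calc F (m + 1) ≤ (Si.card : ℝ) * (1 / ((2:ℝ) ^ m + 1)) := hterm
      _ ≤ (((2:ℝ) ^ (m + 2) - 1) * c) * (1 / ((2:ℝ) ^ m + 1)) := by
          apply mul_le_mul_of_nonneg_right hcast
          positivity
      _ = ((2:ℝ) ^ (m + 2) - 1) * c / ((2:ℝ) ^ m + 1) := by ring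
  have hfib4 : ∀ i : ℕ, 1 ≤ i → F i ≤ 4 * c := by
    intro i hi
    obtain ⟨m, rfl⟩ := Nat.exists_eq_add_of_le hi
    have h1 := hfibgen m
    have hpos : (0:ℝ) < (2:ℝ) ^ m + 1 := by positivity
    have h2 : ((2:ℝ) ^ (m + 2) - 1) * c / ((2:ℝ) ^ m + 1) ≤ 4 * c := by
      rw [div_le_iff₀ hpos]
      have h3 : (2:ℝ) ^ (m + 2) = 4 * 2 ^ m := by ring
      nlinarith [pow_nonneg (by norm_num : (0:ℝ) ≤ 2) m, h3, hc0]
    calc F (1 + m) = F (m + 1) := by rw [Nat.add_comm]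
      _ ≤ _ := h1.trans h2
  have hfib1 : F 1 ≤ 3 / 2 * c := by
    have h := hfibgen 0
    have e : ((2:ℝ) ^ (0 + 2) - 1) * c / ((2:ℝ) ^ 0 + 1) = 3 / 2 * c := by
      norm_num
      ring
    linarith
  rw [hsplit]
  by_cases hK0 : K = 0
  · rw [hK0]
    simp only [zero_add, Finset.range_one, Finset.sum_singleton]
    nlinarith
  · -- K ≥ 1
    have hK1 : 1 ≤ K := Nat.one_le_iff_ne_zero.mpr hK0
    have hn2 : 2 ≤ n := by
      by_contra h
      have : n = 1 := by omega
      rw [this] at hK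
      simp [Nat.clog_one_right] at hK
      exact hK0 hK
    have hKlog : (K : ℝ) ≤ Real.logb 2 n + 1 := by
      have hlt : 2 ^ (K - 1) < n := by
        have := Nat.pow_pred_clog_lt_self (b := 2) (by norm_num) (x := n) hn2
        simpa [hK, Nat.pred_eq_sub_one] using this
      have hltR : (2:ℝ) ^ (K - 1) < (n : ℝ) := by exact_mod_cast hlt
      have h1 : Real.logb 2 ((2:ℝ) ^ (K - 1)) ≤ Real.logb 2 n :=
        Real.logb_le_logb_of_le (by norm_num) (by positivity) hltR.le
      rw [Real.logb_pow, Real.logb_self_eq_one (by norm_num)] at h1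
      have h2 : ((K - 1 : ℕ) : ℝ) = (K : ℝ) - 1 := by
        push_cast [Nat.cast_sub hK1]; ring
      rw [h2] at h1
      linarith
    -- split the sum
    have hsum2 : ∑ i ∈ Finset.range (K + 1), F i
        = F 0 + F 1 + ∑ i ∈ Finset.Ico 2 (K + 1), F i := by
      rw [Finset.range_eq_Ico,
        Finset.sum_eq_sum_Ico_succ_bot (by omega : 0 < K + 1),
        Finset.sum_eq_sum_Ico_succ_bot (by omega : 1 < K + 1)]
      ring
    have htail : ∑ i ∈ Finset.Ico 2 (K + 1), F i ≤ ((K - 1 : ℕ) : ℝ) * (4 * c) := by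
      have := Finset.sum_le_card_nsmul (Finset.Ico 2 (K + 1)) F (4 * c)
        (fun i hi => hfib4 i (by
          have := (Finset.mem_Ico.mp hi).1
          omega))
      rw [Nat.card_Ico] at this
      have hcard : K + 1 - 2 = K - 1 := by omega
      rw [hcard] at this
      simpa [nsmul_eq_mul] using this
    have hKm1 : ((K - 1 : ℕ) : ℝ) = (K : ℝ) - 1 := by
      push_cast [Nat.cast_sub hK1]; ring
    rw [hsum2]
    rw [hKm1] at htail
    have hfin : F 0 + F 1 + ∑ i ∈ Finset.Ico 2 (K + 1), F i
        ≤ c + 3 / 2 * c + ((K : ℝ) - 1) * (4 * c) := by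
      linarith
    refine hfin.trans ?_
    have : ((K : ℝ) - 1) * (4 * c) ≤ Real.logb 2 n * (4 * c) := by
      apply mul_le_mul_of_nonneg_right (by linarith) (by positivity)
    rw [hc] at *
    nlinarith
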